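/- Let φ₀(x) = x²/2 - ixE - log x and Λ(x,y) = (β/2)(x-y)² - φ₀(x)/2 - φ₀(y)/2 + Re φ₀(a₊), where a₊ = e^{iα₀} with sin α₀ = E/2, E ∈ (-2,2), and 0 < β < 1/4. Then for a = e^{iφ}, a' = e^{iφ'} on the unit circle, -Re Λ(e^{iφ}, e^{iφ'}) ≤ -((1-2β)/2)(sin φ - sin α₀)² - ((1-2β)/2)(sin φ' - sin α₀)². -/
import Mathlib

open Real Complex

lemma re_phi0_aux (E θ : ℝ) :
    ((Complex.exp (Complex.I * θ)) ^ 2 / 2 - Complex.I * Complex.exp (Complex.I * θ) * E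
      - Complex.log (Complex.exp (Complex.I * θ))).re
    = (Real.cos θ ^ 2 - Real.sin θ ^ 2) / 2 + E * Real.sin θ := by
  have hlog : (Complex.log (Complex.exp (Complex.I * θ))).re = 0 := by
    rw [Complex.log_re]
    simp [Complex.norm_exp]
  have hexp : Complex.exp (Complex.I * θ) = (Real.cos θ : ℂ) + (Real.sin θ : ℂ) * Complex.I := by
    rw [mul_comm, Complex.exp_mul_I]
    simp [Complex.ofReal_cos, Complex.ofReal_sin]
  rw [Complex.sub_re, hlog, hexp]
  simp [Complex.div_re, Complex.mul_re, Complex.add_re, Complex.sub_re, Complex.normSq,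
    pow_two, Complex.cos_ofReal_re, Complex.sin_ofReal_re]
  ring

lemma re_sq_aux (θ θ' : ℝ) :
    ((Complex.exp (Complex.I * θ) - Complex.exp (Complex.I * θ')) ^ 2).re
    = (Real.cos θ - Real.cos θ') ^ 2 - (Real.sin θ - Real.sin θ') ^ 2 := by
  have hexp : ∀ t : ℝ, Complex.exp (Complex.I * t)
      = (Real.cos t : ℂ) + (Real.sin t : ℂ) * Complex.I := by
    intro t
    rw [mul_comm, Complex.exp_mul_I]
    simp [Complex.ofReal_cos, Complex.ofReal_sin]
  rw [hexp, hexp]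
  simp [Complex.mul_re, Complex.add_re, Complex.sub_re, pow_two,
    Complex.cos_ofReal_re, Complex.sin_ofReal_re]

/-- For `φ₀(x) = x²/2 - ixE - log x`, `Λ(x,y) = (β/2)(x-y)² - φ₀(x)/2 - φ₀(y)/2 + Re φ₀(a₊)`,
with `a₊ = e^{iα₀}`, `sin α₀ = E/2`, `E ∈ (-2,2)`, `0 < β < 1/4`, we have for points on the
unit circle:
`-Re Λ(e^{iφ}, e^{iφ'}) ≤ -((1-2β)/2)(sin φ - sin α₀)² - ((1-2β)/2)(sin φ' - sin α₀)²`. -/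
theorem re_Lambda_bound (E β α₀ : ℝ) (hE : E ∈ Set.Ioo (-2 : ℝ) 2)
    (hβ : 0 < β) (hβ' : β < 1 / 4)
    (hα : Real.sin α₀ = E / 2) (hα' : α₀ ∈ Set.Ioo (-(π / 2)) (π / 2))
    (φ₀ : ℂ → ℂ) (hφ₀ : φ₀ = fun x => x ^ 2 / 2 - Complex.I * x * E - Complex.log x)
    (Λ : ℂ → ℂ → ℂ)
    (hΛ : Λ = fun x y => (β / 2 : ℂ) * (x - y) ^ 2 - φ₀ x / 2 - φ₀ y / 2
      + ((φ₀ (Complex.exp (Complex.I * α₀))).re : ℂ)) :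
    ∀ φ φ' : ℝ,
      -(Λ (Complex.exp (Complex.I * φ)) (Complex.exp (Complex.I * φ'))).re ≤
        -((1 - 2 * β) / 2) * (Real.sin φ - Real.sin α₀) ^ 2
        - ((1 - 2 * β) / 2) * (Real.sin φ' - Real.sin α₀) ^ 2 := by
  intro φ φ'
  have key : ∀ θ : ℝ, (φ₀ (Complex.exp (Complex.I * θ))).re
      = (Real.cos θ ^ 2 - Real.sin θ ^ 2) / 2 + E * Real.sin θ := by
    intro θ; rw [hφ₀]; exact re_phi0_aux E θ
  have hre : (Λ (Complex.exp (Complex.I * φ)) (Complex.exp (Complex.I * φ'))).re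
      = β / 2 * (((Complex.exp (Complex.I * φ) - Complex.exp (Complex.I * φ')) ^ 2).re)
        - (φ₀ (Complex.exp (Complex.I * φ))).re / 2
        - (φ₀ (Complex.exp (Complex.I * φ'))).re / 2
        + (φ₀ (Complex.exp (Complex.I * α₀))).re := by
    rw [hΛ]
    simp [Complex.add_re, Complex.sub_re, Complex.mul_re, Complex.div_re, Complex.normSq]
  rw [hre, re_sq_aux, key, key, key]
  have hE2 : E = 2 * Real.sin α₀ := by linarith
  rw [hE2]
  have p1 : Real.sin φ ^ 2 + Real.cos φ ^ 2 = 1 := Real.sin_sq_add_cos_sq φ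
  have p2 : Real.sin φ' ^ 2 + Real.cos φ' ^ 2 = 1 := Real.sin_sq_add_cos_sq φ'
  have p3 : Real.sin α₀ ^ 2 + Real.cos α₀ ^ 2 = 1 := Real.sin_sq_add_cos_sq α₀
  nlinarith [sq_nonneg (Real.cos φ - Real.cos φ'),
    sq_nonneg (Real.sin φ + Real.sin φ' - 2 * Real.sin α₀), hβ.le,
    mul_nonneg hβ.le (sq_nonneg (Real.cos φ - Real.cos φ')),
    mul_nonneg hβ.le (sq_nonneg (Real.sin φ + Real.sin φ' - 2 * Real.sin α₀))]
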